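/- Let f : [m, M] → ℝ be C² with |f''(x)| ≤ γ for all x ∈ [m, M], and let A ⊂ [m, M] be a finite nonempty set of control points with fill distance h := sup_{x ∈ [m,M]} min_{a ∈ A} |x − a|. Define t⁻(x) := max_{a ∈ A} (f(a) + f'(a)(x − a) − (γ/2)(x − a)²). Then t⁻ ≤ f on [m, M] and sup_{x ∈ [m,M]} (f(x) − t⁻(x)) ≤ γ h². -/

import Mathlib

open Set Topology

private lemma mono_of_deriv_aux (φ ψ : ℝ → ℝ) {c d : ℝ} (hcd : c ≤ d)
    (hcont : ContinuousOn φ (Set.Icc c d))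
    (hder : ∀ t ∈ Set.Ioo c d, HasDerivAt φ (ψ t) t)
    (hsign : ∀ t ∈ Set.Ioo c d, 0 ≤ ψ t) : φ c ≤ φ d := by
  have hmono : MonotoneOn φ (Set.Icc c d) := by
    apply monotoneOn_of_deriv_nonneg (convex_Icc c d) hcont
    · intro t ht
      rw [interior_Icc] at ht
      exact (hder t ht).differentiableAt.differentiableWithinAt
    · intro t ht
      rw [interior_Icc] at ht
      rw [(hder t ht).deriv]
      exact hsign t ht
  exact hmono (Set.left_mem_Icc.2 hcd) (Set.right_mem_Icc.2 hcd) hcd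

private lemma taylor_half_bound
    (f : ℝ → ℝ) (m M γ : ℝ) (hm : m < M)
    (hf : ContDiffOn ℝ 2 f (Set.Icc m M))
    (hγ : ∀ x ∈ Set.Icc m M, |iteratedDerivWithin 2 f (Set.Icc m M) x| ≤ γ)
    {a x : ℝ} (ha : a ∈ Set.Icc m M) (hx : x ∈ Set.Icc m M) :
    |f x - f a - derivWithin f (Set.Icc m M) a * (x - a)| ≤ γ / 2 * (x - a) ^ 2 := by
  set s := Set.Icc m M with hs
  set g := derivWithin f s with hgdef
  have hu : UniqueDiffOn ℝ s := uniqueDiffOn_Icc hm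
  have h2 : (2 : ℕ∞) = 1 + 1 := by norm_num
  have hgc : ContDiffOn ℝ 1 g s := hf.derivWithin hu (by norm_num)
  have hgdiff : DifferentiableOn ℝ g s := hgc.differentiableOn one_ne_zero
  have hgbound : ∀ y ∈ s, ‖derivWithin g s y‖ ≤ γ := by
    intro y hy
    have : iteratedDerivWithin 2 f s y = derivWithin g s y := by
      rw [iteratedDerivWithin_succ]
      exact derivWithin_congr (fun z hz => congrFun iteratedDerivWithin_one z)
        (congrFun iteratedDerivWithin_one y)
    rw [Real.norm_eq_abs, ← this]
    exact hγ y hy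
  have hlip : ∀ p ∈ s, ∀ q ∈ s, |g p - g q| ≤ γ * |p - q| := by
    intro p hp q hq
    have := Convex.norm_image_sub_le_of_norm_derivWithin_le hgdiff hgbound (convex_Icc m M) hq hp
    simpa [Real.norm_eq_abs] using this
  -- derivative of f at interior points
  have hfd : ∀ t ∈ Set.Ioo m M, HasDerivAt f (g t) t := by
    intro t ht
    have hmem : s ∈ 𝓝 t := Icc_mem_nhds ht.1 ht.2
    have hdiff : DifferentiableAt ℝ f t :=
      ((hf.differentiableOn (by norm_num) t (Set.Ioo_subset_Icc_self ht)).differentiableAt hmem)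
    have heq : derivWithin f s t = deriv f t := derivWithin_of_mem_nhds hmem
    rw [hgdef, heq]
    exact hdiff.hasDerivAt
  -- P c t = f t - f a - g a * (t - a) - c * (t - a)^2
  set P : ℝ → ℝ → ℝ := fun c t => f t - f a - g a * (t - a) - c * (t - a) ^ 2 with hP
  have hPa : ∀ c, P c a = 0 := by intro c; simp [hP]
  have hPder : ∀ (c : ℝ), ∀ t ∈ Set.Ioo m M,
      HasDerivAt (P c) (g t - g a - c * (2 * (t - a))) t := by
    intro c t ht
    have h1 : HasDerivAt (fun t : ℝ => t - a) 1 t := (hasDerivAt_id t).sub_const a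
    have h2 : HasDerivAt (fun t : ℝ => (t - a) ^ 2) (2 * (t - a) ^ 1 * 1) t := h1.pow 2
    have h3 := ((hfd t ht).sub_const (f a)).sub
      ((h1.const_mul (g a)).add (h2.const_mul c))
    have h4 : ((fun u : ℝ => f u - f a) - ((fun u => g a * (u - a)) + fun u => c * (u - a) ^ 2)) = P c := by
      funext u; simp only [hP, Pi.sub_apply, Pi.add_apply]; ring
    rw [h4] at h3
    exact h3.congr_deriv (by ring)
  have hPcont : ∀ (c p q : ℝ), p ∈ s → q ∈ s → ContinuousOn (P c) (Set.Icc p q) := by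
    intro c p q hp hq
    have hsub : Set.Icc p q ⊆ s := Set.Icc_subset_Icc hp.1 hq.2
    have hpoly : ContinuousOn (fun t : ℝ => t - a) (Set.Icc p q) :=
      continuousOn_id.sub continuousOn_const
    exact (((hf.continuousOn.mono hsub).sub continuousOn_const).sub
      (continuousOn_const.mul hpoly)).sub (continuousOn_const.mul (hpoly.pow 2))
  have hIoo : ∀ p q : ℝ, p ∈ s → q ∈ s → Set.Ioo p q ⊆ Set.Ioo m M :=
    fun p q hp hq => Set.Ioo_subset_Ioo hp.1 hq.2
  have hIoos : ∀ p q : ℝ, p ∈ s → q ∈ s → Set.Ioo p q ⊆ s :=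
    fun p q hp hq t ht => Set.Ioo_subset_Icc_self (hIoo p q hp hq ht)
  have hγ0 : 0 ≤ γ := le_trans (abs_nonneg _) (hγ a ha)
  -- upper bound: P (γ/2) x ≤ 0
  have hup : P (γ / 2) x ≤ 0 := by
    rcases le_total a x with hax | hxa
    · have := mono_of_deriv_aux (fun t => -(P (γ / 2) t))
        (fun t => -(g t - g a - γ / 2 * (2 * (t - a)))) hax
        ((hPcont _ _ _ ha hx).neg)
        (fun t ht => ((hPder (γ / 2) t (hIoo a x ha hx ht))).neg)
        (fun t ht => by
          have hl := hlip t (hIoos a x ha hx ht) a ha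
          rw [abs_of_nonneg (by linarith [ht.1] : (0:ℝ) ≤ t - a)] at hl
          have := (abs_le.1 hl).2
          nlinarith)
      have := this
      simpa [hPa] using this
    · have := mono_of_deriv_aux (P (γ / 2))
        (fun t => g t - g a - γ / 2 * (2 * (t - a))) hxa
        (hPcont _ _ _ hx ha)
        (fun t ht => hPder (γ / 2) t (hIoo x a hx ha ht))
        (fun t ht => by
          have hl := hlip t (hIoos x a hx ha ht) a ha
          rw [abs_of_nonpos (by linarith [ht.2] : t - a ≤ 0)] at hl
          have := (abs_le.1 hl).1
          nlinarith)
      simpa [hPa] using this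
  -- lower bound: 0 ≤ P (-(γ/2)) x
  have hlo : 0 ≤ P (-(γ / 2)) x := by
    rcases le_total a x with hax | hxa
    · have := mono_of_deriv_aux (P (-(γ / 2)))
        (fun t => g t - g a - (-(γ / 2)) * (2 * (t - a))) hax
        (hPcont _ _ _ ha hx)
        (fun t ht => hPder (-(γ / 2)) t (hIoo a x ha hx ht))
        (fun t ht => by
          have hl := hlip t (hIoos a x ha hx ht) a ha
          rw [abs_of_nonneg (by linarith [ht.1] : (0:ℝ) ≤ t - a)] at hl
          have := (abs_le.1 hl).1
          nlinarith)
      simpa [hPa] using this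
    · have := mono_of_deriv_aux (fun t => -(P (-(γ / 2)) t))
        (fun t => -(g t - g a - (-(γ / 2)) * (2 * (t - a)))) hxa
        ((hPcont _ _ _ hx ha).neg)
        (fun t ht => (hPder (-(γ / 2)) t (hIoo x a hx ha ht)).neg)
        (fun t ht => by
          have hl := hlip t (hIoos x a hx ha ht) a ha
          rw [abs_of_nonpos (by linarith [ht.2] : t - a ≤ 0)] at hl
          have := (abs_le.1 hl).2
          nlinarith)
      simpa [hPa] using this
  rw [abs_le]
  constructor
  · have : P (-(γ / 2)) x = f x - f a - g a * (x - a) + γ / 2 * (x - a) ^ 2 := by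
      simp only [hP]; ring
    rw [this] at hlo; linarith
  · have : P (γ / 2) x = f x - f a - g a * (x - a) - γ / 2 * (x - a) ^ 2 := by
      simp only [hP]
    rw [this] at hup; linarith

/-- `O(h²)` error bound for the univariate max-plus (supremum of parabolas)
underestimator built from a finite set `A` of control points with fill
distance `h`. -/
theorem maxplus_univariate_error_bound
    (f : ℝ → ℝ) (m M γ h : ℝ)
    (hf : ContDiffOn ℝ 2 f (Set.Icc m M))
    (hγ : ∀ x ∈ Set.Icc m M, |iteratedDerivWithin 2 f (Set.Icc m M) x| ≤ γ)
    (A : Finset ℝ) (hA : A.Nonempty) (hAK : ↑A ⊆ Set.Icc m M)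
    (hfill : ∀ x ∈ Set.Icc m M, A.inf' hA (fun a => |x - a|) ≤ h) :
    ∀ x ∈ Set.Icc m M,
      A.sup' hA (fun a =>
          f a + derivWithin f (Set.Icc m M) a * (x - a) - γ / 2 * (x - a) ^ 2)
        ≤ f x
      ∧ f x - A.sup' hA (fun a =>
          f a + derivWithin f (Set.Icc m M) a * (x - a) - γ / 2 * (x - a) ^ 2)
        ≤ γ * h ^ 2 := by
  intro x hx
  have hγ0 : 0 ≤ γ := le_trans (abs_nonneg _) (hγ x hx)
  have hh0 : 0 ≤ h :=
    le_trans (Finset.le_inf' hA _ (fun b _ => abs_nonneg (x - b))) (hfill x hx)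
  have hγh : 0 ≤ γ * h ^ 2 := mul_nonneg hγ0 (pow_nonneg hh0 2)
  by_cases hm : m < M
  · have key : ∀ a ∈ A, |f x - f a - derivWithin f (Set.Icc m M) a * (x - a)| ≤
        γ / 2 * (x - a) ^ 2 :=
      fun a haA => taylor_half_bound f m M γ hm hf hγ (hAK haA) hx
    constructor
    · apply Finset.sup'_le
      intro a haA
      have := (abs_le.1 (key a haA)).1
      linarith
    · obtain ⟨a, haA, hainf⟩ := Finset.exists_mem_eq_inf' hA (fun a => |x - a|)
      have hah : |x - a| ≤ h := by rw [← hainf]; exact hfill x hx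
      have hsup := Finset.le_sup' (f := fun a =>
        f a + derivWithin f (Set.Icc m M) a * (x - a) - γ / 2 * (x - a) ^ 2) haA
      have h1 := (abs_le.1 (key a haA)).2
      have hsq : (x - a) ^ 2 ≤ h ^ 2 := by
        calc (x - a) ^ 2 = |x - a| ^ 2 := (sq_abs _).symm
        _ ≤ h ^ 2 := pow_le_pow_left₀ (abs_nonneg _) hah 2
      have hmul : γ * (x - a) ^ 2 ≤ γ * h ^ 2 := mul_le_mul_of_nonneg_left hsq hγ0
      linarith
  · have hMm : M ≤ m := le_of_not_gt hm
    have hxm : x = m := le_antisymm (le_trans hx.2 hMm) hx.1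
    have hAeq : ∀ a ∈ A, a = x := by
      intro a haA
      have ha := hAK haA
      have : a = m := le_antisymm (le_trans ha.2 hMm) ha.1
      rw [this, hxm]
    have hsup : A.sup' hA (fun a =>
        f a + derivWithin f (Set.Icc m M) a * (x - a) - γ / 2 * (x - a) ^ 2) = f x := by
      rw [Finset.sup'_congr hA rfl (g := fun _ => f x)
        (fun a haA => by rw [hAeq a haA]; ring)]
      exact Finset.sup'_const hA _
    rw [hsup]
    exact ⟨le_refl _, by linarith⟩
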